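/- Fix μ > 0, m > 3/2, β₀, β₁ ∈ ℝ, and δ_N > 0. Let V_N(ξ,τ) = β₀ φ₀(ξ) + β₁ e^{−τ/2} φ₁(ξ). Let Ψ : ℝ × [0,∞) → ℝ be continuous with Ψ(·,τ) integrable for each τ, and suppose there is C_ψ > 0 such that for all τ ≥ 0: ‖Ψ(·,τ)‖_{L²(m)} ≤ C_ψ e^{−τ} and sup_{ξ∈ℝ} |∫_{−∞}^ξ Ψ(y,τ) dy| ≤ C_ψ e^{−τ}. Assume that for all ξ ∈ ℝ and τ ≥ 0, both 1 − (1/(2μ)) ∫_{−∞}^ξ (V_N(y,τ) + Ψ(y,τ)) dy ≥ δ_N and 1 − (1/(2μ)) ∫_{−∞}^ξ V_N(y,τ) dy ≥ δ_N. Define w(ξ,τ) = −2μ ∂_ξ log(1 − (1/(2μ)) ∫_{−∞}^ξ (V_N(y,τ) + Ψ(y,τ)) dy) and w_N(ξ,τ) = −2μ ∂_ξ log(1 − (1/(2μ)) ∫_{−∞}^ξ V_N(y,τ) dy). Then there exists a constant C_φ > 0 such that ‖w(·,τ) − w_N(·,τ)‖_{L²(m)} ≤ C_φ e^{−τ} for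 all τ ≥ 0. -/

import Mathlib

open MeasureTheory

/-- The Gaussian `φ₀(ξ) = (4πμ)^{−1/2} e^{−ξ²/(4μ)}`. -/
noncomputable def phi0 (μ ξ : ℝ) : ℝ :=
  (Real.sqrt (4 * Real.pi * μ))⁻¹ * Real.exp (-ξ ^ 2 / (4 * μ))

/-- The heat-equation representation of the diffusive N-wave:
`V_N(ξ,τ) = β₀ φ₀(ξ) + β₁ e^{−τ/2} φ₁(ξ)`, with `φ₁ = φ₀'`. -/
noncomputable def VN (μ β₀ β₁ ξ τ : ℝ) : ℝ :=
  β₀ * phi0 μ ξ + β₁ * Real.exp (-τ / 2) * deriv (phi0 μ) ξ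

/-- The `L²(m)` norm, `‖f‖_{L²(m)} = (∫ (1+ξ²)^m |f(ξ)|² dξ)^{1/2}`. -/
noncomputable def normL2m (m : ℝ) (f : ℝ → ℝ) : ℝ :=
  Real.sqrt (∫ ξ : ℝ, (1 + ξ ^ 2) ^ m * (f ξ) ^ 2)

open Real Filter Asymptotics Set Topology

set_option maxHeartbeats 2000000

lemma sq_add_le_two_sq (u v : ℝ) : (u+v)^2 ≤ 2*u^2 + 2*v^2 := by
  nlinarith [sq_nonneg (u-v)]

lemma sqrt_add_le_my {x y : ℝ} (hx : 0 ≤ x) (hy : 0 ≤ y) :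
    Real.sqrt (x + y) ≤ Real.sqrt x + Real.sqrt y := by
  rw [show x + y = Real.sqrt x ^ 2 + Real.sqrt y ^ 2 by rw [Real.sq_sqrt hx, Real.sq_sqrt hy]]
  calc Real.sqrt (Real.sqrt x ^ 2 + Real.sqrt y ^ 2)
      ≤ Real.sqrt ((Real.sqrt x + Real.sqrt y) ^ 2) := by
        apply Real.sqrt_le_sqrt; nlinarith [Real.sqrt_nonneg x, Real.sqrt_nonneg y]
    _ = Real.sqrt x + Real.sqrt y := Real.sqrt_sq (by positivity)

lemma phi0_hasDerivAt (μ : ℝ) (hμ : 0 < μ) (ξ : ℝ) :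
    HasDerivAt (phi0 μ) (-(ξ / (2 * μ)) * phi0 μ ξ) ξ := by
  have h1 : HasDerivAt (fun ξ : ℝ => -ξ ^ 2 / (4 * μ)) (-(2 * ξ) / (4 * μ)) ξ := by
    have := ((hasDerivAt_pow 2 ξ).neg).div_const (4 * μ)
    simpa using this
  have h2 := (h1.exp).const_mul (Real.sqrt (4 * Real.pi * μ))⁻¹
  refine h2.congr_deriv ?_
  unfold phi0
  ring

lemma deriv_phi0 (μ : ℝ) (hμ : 0 < μ) :
    deriv (phi0 μ) = fun ξ => -(ξ / (2 * μ)) * phi0 μ ξ :=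
  funext fun ξ => (phi0_hasDerivAt μ hμ ξ).deriv

lemma phi0_pos (μ : ℝ) (hμ : 0 < μ) (ξ : ℝ) : 0 < phi0 μ ξ := by
  unfold phi0
  have h := Real.pi_pos
  have : 0 < Real.sqrt (4 * Real.pi * μ) := Real.sqrt_pos.2 (by positivity)
  positivity

lemma phi0_cont (μ : ℝ) : Continuous (phi0 μ) := by
  unfold phi0; fun_prop

lemma phi0_eq (μ : ℝ) (hμ : 0 < μ) :
    phi0 μ = fun ξ => (Real.sqrt (4 * Real.pi * μ))⁻¹ * Real.exp (-(1/(4*μ)) * ξ ^ 2) := by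
  funext ξ; unfold phi0; ring_nf

lemma phi0_integrable (μ : ℝ) (hμ : 0 < μ) : Integrable (phi0 μ) := by
  rw [phi0_eq μ hμ]
  exact ((integrable_exp_neg_mul_sq (by positivity)).const_mul _)

lemma id_mul_phi0_integrable (μ : ℝ) (hμ : 0 < μ) :
    Integrable (fun ξ => ξ * phi0 μ ξ) := by
  have h := (integrable_mul_exp_neg_mul_sq (b := 1/(4*μ)) (by positivity)).const_mul
      (Real.sqrt (4 * Real.pi * μ))⁻¹
  apply h.congr
  filter_upwards with ξ
  rw [phi0_eq μ hμ]; ring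

lemma abs_mul_phi0_integrable (μ : ℝ) (hμ : 0 < μ) :
    Integrable (fun ξ => |ξ| * phi0 μ ξ) := by
  have h := (id_mul_phi0_integrable μ hμ).abs
  apply h.congr
  filter_upwards with ξ
  rw [abs_mul, abs_of_pos (phi0_pos μ hμ ξ)]

lemma tendsto_psi (b r a c : ℝ) (hb : 0 < b) (hr : 0 ≤ r) :
    Tendsto (fun u : ℝ => (1+u^2)^r * (a + c*u)^2 * Real.exp (-b*u^2)) atTop (𝓝 0) := by
  have exp0 : Tendsto (fun x : ℝ => Real.exp (-(1/2) * x)) atTop (𝓝 0) := by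
    have h1 : Tendsto (fun x : ℝ => (1/2 : ℝ) * x) atTop atTop :=
      Tendsto.const_mul_atTop one_half_pos tendsto_id
    have := tendsto_exp_neg_atTop_nhds_zero.comp h1
    simpa [Function.comp_def, neg_mul] using this
  have key : Tendsto (fun u : ℝ => u ^ (2*r+2) * Real.exp (-b*u^2)) atTop (𝓝 0) :=
    (rpow_mul_exp_neg_mul_sq_isLittleO_exp_neg hb (2*r+2)).isBigO.trans_tendsto exp0
  have key2 : Tendsto (fun u : ℝ => (2:ℝ)^r * (|a|+|c|)^2 *
      (u ^ (2*r+2) * Real.exp (-b*u^2))) atTop (𝓝 0) := by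
    simpa using key.const_mul ((2:ℝ)^r * (|a|+|c|)^2)
  apply squeeze_zero' ?_ ?_ key2
  · filter_upwards [eventually_ge_atTop (1:ℝ)] with u hu
    positivity
  · filter_upwards [eventually_ge_atTop (1:ℝ)] with u hu
    have hu0 : (0:ℝ) < u := lt_of_lt_of_le one_pos hu
    have h1 : (1+u^2)^r ≤ (2:ℝ)^r * u ^ (2*r) := by
      have : (1+u^2 : ℝ) ≤ 2*u^2 := by nlinarith
      calc (1+u^2)^r ≤ (2*u^2)^r := Real.rpow_le_rpow (by positivity) this hr
        _ = (2:ℝ)^r * (u^2)^r := Real.mul_rpow (by norm_num) (by positivity)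
        _ = (2:ℝ)^r * u ^ (2*r) := by
            rw [← Real.rpow_natCast u 2, ← Real.rpow_mul hu0.le]
            norm_num
    have h2 : (a + c*u)^2 ≤ (|a|+|c|)^2 * u^2 := by
      have habs : |a + c*u| ≤ (|a|+|c|) * u := by
        calc |a + c*u| ≤ |a| + |c| * u := by
              refine (abs_add_le _ _).trans ?_
              rw [abs_mul, abs_of_pos hu0]
          _ ≤ (|a|+|c|) * u := by nlinarith [abs_nonneg a, abs_nonneg c]
      calc (a + c*u)^2 = |a + c*u|^2 := (sq_abs _).symm
        _ ≤ ((|a|+|c|)*u)^2 := by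
            have h0 : (0:ℝ) ≤ |a + c*u| := abs_nonneg _
            nlinarith
        _ = (|a|+|c|)^2 * u^2 := by ring
    have hrw : u ^ (2*r) * u^2 = u ^ (2*r+2) := by
      rw [← Real.rpow_natCast u 2, ← Real.rpow_add hu0]
      norm_num
    calc (1+u^2)^r * (a + c*u)^2 * Real.exp (-b*u^2)
        ≤ ((2:ℝ)^r * u ^ (2*r)) * ((|a|+|c|)^2 * u^2) * Real.exp (-b*u^2) := by
          have e := Real.exp_pos (-b*u^2)
          apply mul_le_mul_of_nonneg_right _ e.le
          have hA : (0:ℝ) ≤ (1+u^2)^r := by positivity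
          have hB : (0:ℝ) ≤ (a+c*u)^2 := sq_nonneg _
          nlinarith [Real.rpow_nonneg (le_of_lt hu0) (2*r), pow_nonneg hu0.le 2,
            mul_le_mul h1 h2 hB (by positivity : (0:ℝ) ≤ (2:ℝ)^r * u^(2*r))]
      _ = (2:ℝ)^r * (|a|+|c|)^2 * (u ^ (2*r+2) * Real.exp (-b*u^2)) := by
          rw [← hrw]; ring

lemma int_weight (b r a c : ℝ) (hb : 0 < b) (hr : 0 ≤ r) :
    Integrable (fun x : ℝ => (1+x^2)^r * ((a + c * |x|) * Real.exp (-b*x^2))^2) := by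
  set φ : ℝ → ℝ := fun x => (1+x^2)^r * (a + c * |x|)^2 * Real.exp (-b*x^2) with hφdef
  have habs : Tendsto (fun x : ℝ => |x|) (cocompact ℝ) atTop := by
    exact (tendsto_norm_cocompact_atTop (E := ℝ)).congr (fun x => Real.norm_eq_abs x)
  have hφ : Tendsto φ (cocompact ℝ) (𝓝 0) := by
    have := (tendsto_psi b r a c hb hr).comp habs
    apply this.congr
    intro x
    simp [Function.comp_def, hφdef, sq_abs]
  have hW : Continuous (fun x : ℝ => (1+x^2)^r) :=
    (continuous_const.add (continuous_pow 2)).rpow_const (fun x => Or.inr hr)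
  have hc : Continuous (fun x : ℝ => (1+x^2)^r * ((a + c * |x|) * Real.exp (-b*x^2))^2) := by
    apply hW.mul
    apply Continuous.pow
    exact (continuous_const.add (continuous_const.mul continuous_abs)).mul
      (Real.continuous_exp.comp (continuous_const.mul (continuous_pow 2)))
  have hBigO : (fun x : ℝ => (1+x^2)^r * ((a + c * |x|) * Real.exp (-b*x^2))^2)
      =O[cocompact ℝ] fun x => Real.exp (-b*x^2) := by
    have h1 : φ =O[cocompact ℝ] (fun _ : ℝ => (1:ℝ)) := hφ.isBigO_one ℝ
    have h2 := h1.mul (isBigO_refl (fun x : ℝ => Real.exp (-b*x^2)) (cocompact ℝ))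
    apply IsBigO.trans _ (by simpa using h2)
    apply Asymptotics.isBigO_of_le
    intro x
    simp only [hφdef, Real.norm_eq_abs]
    apply le_of_eq
    ring_nf
  exact hc.locallyIntegrable.integrable_of_isBigO_cocompact hBigO
    ((integrable_exp_neg_mul_sq hb).integrableAtFilter _)

lemma hasDerivAt_integral_Iio (q : ℝ → ℝ) (hqc : Continuous q) (hqi : Integrable q) (x : ℝ) :
    HasDerivAt (fun x => ∫ y in Set.Iio x, q y) (q x) x := by
  have heq : (fun x => ∫ y in Set.Iio x, q y)
      = fun x => (∫ y in Set.Iic (0:ℝ), q y) + ∫ y in (0:ℝ)..x, q y := by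
    funext t
    rw [setIntegral_congr_set Iio_ae_eq_Iic,
      ← intervalIntegral.integral_Iic_sub_Iic hqi.integrableOn hqi.integrableOn]
    ring
  rw [heq]
  exact (intervalIntegral.integral_hasDerivAt_right hqi.intervalIntegrable
    (hqc.stronglyMeasurableAtFilter _ _) (hqc.continuousAt)).const_add _

/-- Theorem 2, local attractivity: let `w` and `w_N` be obtained from
`V_N + Ψ` and `V_N` by the inverse Cole-Hopf transformation, where `Ψ` satisfies the
stated `O(e^{−τ})` bounds and both denominators are bounded below by `δ_N`. Then there
is `C_φ > 0` with `‖w(·,τ) − w_N(·,τ)‖_{L²(m)} ≤ C_φ e^{−τ}` for all `τ ≥ 0`. -/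
theorem stmt14 (μ m β₀ β₁ δN : ℝ) (hμ : 0 < μ) (hm : 3 / 2 < m) (hδN : 0 < δN)
    (Ψ : ℝ → ℝ → ℝ)
    (hcont : ContinuousOn (fun z : ℝ × ℝ => Ψ z.1 z.2) (Set.univ ×ˢ Set.Ici 0))
    (hint : ∀ τ : ℝ, 0 ≤ τ → Integrable (fun y => Ψ y τ))
    (Cψ : ℝ) (hCψ : 0 < Cψ)
    (hbound1 : ∀ τ : ℝ, 0 ≤ τ →
      normL2m m (fun ξ => Ψ ξ τ) ≤ Cψ * Real.exp (-τ))
    (hbound2 : ∀ τ : ℝ, 0 ≤ τ → ∀ ξ : ℝ,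
      |∫ y in Set.Iio ξ, Ψ y τ| ≤ Cψ * Real.exp (-τ))
    (hlow1 : ∀ ξ : ℝ, ∀ τ : ℝ, 0 ≤ τ →
      δN ≤ 1 - 1 / (2 * μ) * ∫ y in Set.Iio ξ, (VN μ β₀ β₁ y τ + Ψ y τ))
    (hlow2 : ∀ ξ : ℝ, ∀ τ : ℝ, 0 ≤ τ →
      δN ≤ 1 - 1 / (2 * μ) * ∫ y in Set.Iio ξ, VN μ β₀ β₁ y τ) :
    ∃ Cφ > 0, ∀ τ : ℝ, 0 ≤ τ →
      normL2m m (fun ξ =>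
        (-(2 * μ) * deriv (fun x =>
          Real.log (1 - 1 / (2 * μ) * ∫ y in Set.Iio x, (VN μ β₀ β₁ y τ + Ψ y τ))) ξ)
        - (-(2 * μ) * deriv (fun x =>
          Real.log (1 - 1 / (2 * μ) * ∫ y in Set.Iio x, VN μ β₀ β₁ y τ)) ξ))
      ≤ Cφ * Real.exp (-τ) := by
  have hm0 : (0:ℝ) ≤ m := by linarith
  have hb : (0:ℝ) < 1/(4*μ) := by positivity
  -- the dominating profile Q
  set c₀ : ℝ := (Real.sqrt (4 * Real.pi * μ))⁻¹ with hc₀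
  set Q : ℝ → ℝ := fun ξ => (|β₀| + |β₁|/(2*μ) * |ξ|) * phi0 μ ξ with hQdef
  have hQnn : ∀ ξ, 0 ≤ Q ξ := by
    intro ξ
    have := (phi0_pos μ hμ ξ).le
    have h1 : 0 ≤ |β₀| + |β₁|/(2*μ) * |ξ| := by positivity
    exact mul_nonneg h1 this
  have hQcont : Continuous Q := by
    apply Continuous.mul _ (phi0_cont μ)
    exact continuous_const.add (continuous_const.mul continuous_abs)
  have hQint : Integrable Q := by
    have h1 := (phi0_integrable μ hμ).const_mul |β₀|
    have h2 := (abs_mul_phi0_integrable μ hμ).const_mul (|β₁|/(2*μ))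
    apply (h1.add h2).congr
    filter_upwards with ξ
    simp only [Pi.add_apply, hQdef]; ring
  set Mf : ℝ := ∫ x, Q x with hMfdef
  have hMf : 0 ≤ Mf := integral_nonneg hQnn
  have hQIio : ∀ ξ, ∫ y in Set.Iio ξ, Q y ≤ Mf :=
    fun ξ => setIntegral_le_integral hQint (Eventually.of_forall hQnn)
  -- weighted integrability of Q²
  have hWQ : Integrable (fun ξ : ℝ => (1+ξ^2)^m * (Q ξ)^2) := by
    have h := (int_weight (1/(4*μ)) m |β₀| (|β₁|/(2*μ)) hb hm0).const_mul (c₀^2)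
    apply h.congr
    filter_upwards with ξ
    simp only [hQdef, phi0_eq μ hμ, ← hc₀]
    ring
  set IQ : ℝ := ∫ ξ : ℝ, (1+ξ^2)^m * (Q ξ)^2 with hIQdef
  have hIQnn : 0 ≤ IQ := integral_nonneg (fun ξ => by
    have := sq_nonneg (Q ξ); positivity)
  set Kf : ℝ := Real.sqrt IQ with hKfdef
  have hKf : 0 ≤ Kf := Real.sqrt_nonneg _
  set KF : ℝ := 1 + (Mf + Cψ)/(2*μ) with hKFdef
  have hKF : 0 < KF := by positivity
  refine ⟨Real.sqrt 2 * (Cψ/δN) + Real.sqrt 2 * (Cψ/(2*μ*δN^2)) * Kf + 1, by positivity, ?_⟩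
  intro τ hτ
  set Cφ : ℝ := Real.sqrt 2 * (Cψ/δN) + Real.sqrt 2 * (Cψ/(2*μ*δN^2)) * Kf + 1 with hCφdef

  -- slice facts
  have hVNeq : ∀ ξ : ℝ, VN μ β₀ β₁ ξ τ
      = β₀ * phi0 μ ξ + β₁ * Real.exp (-τ/2) * (-(ξ/(2*μ)) * phi0 μ ξ) := by
    intro ξ; simp only [VN, deriv_phi0 μ hμ]
  have hVNeq' : (fun ξ : ℝ => VN μ β₀ β₁ ξ τ)
      = fun ξ => β₀ * phi0 μ ξ + β₁ * Real.exp (-τ/2) * (-(ξ/(2*μ)) * phi0 μ ξ) :=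
    funext hVNeq
  have hfc : Continuous (fun ξ : ℝ => VN μ β₀ β₁ ξ τ) := by
    rw [hVNeq']
    exact (continuous_const.mul (phi0_cont μ)).add (continuous_const.mul
      (((continuous_id.div_const (2*μ)).neg).mul (phi0_cont μ)))
  have hfi : Integrable (fun ξ : ℝ => VN μ β₀ β₁ ξ τ) := by
    rw [hVNeq']
    apply Integrable.add ((phi0_integrable μ hμ).const_mul β₀)
    have h := (id_mul_phi0_integrable μ hμ).const_mul (β₁ * Real.exp (-τ/2) * (-(1/(2*μ))))
    apply h.congr
    filter_upwards with ξ
    ring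
  have hτe1 : Real.exp (-τ/2) ≤ 1 := Real.exp_le_one_iff.2 (by linarith)
  have hfQ : ∀ ξ, |VN μ β₀ β₁ ξ τ| ≤ Q ξ := by
    intro ξ
    rw [hVNeq ξ]
    have hφ := phi0_pos μ hμ ξ
    have he0 := Real.exp_pos (-τ/2)
    have h1 : |β₀ * phi0 μ ξ| = |β₀| * phi0 μ ξ := by
      rw [abs_mul, abs_of_pos hφ]
    have h2 : |β₁ * Real.exp (-τ/2) * (-(ξ/(2*μ)) * phi0 μ ξ)|
        = |β₁| * Real.exp (-τ/2) * (|ξ|/(2*μ) * phi0 μ ξ) := by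
      rw [abs_mul, abs_mul, abs_mul, abs_neg, abs_div, abs_of_pos hφ, abs_of_pos he0,
        abs_of_pos (show (0:ℝ) < 2*μ by positivity)]
    refine (abs_add_le _ _).trans ?_
    rw [h1, h2]
    simp only [hQdef]
    have hkey : |β₁| * Real.exp (-τ/2) * (|ξ|/(2*μ) * phi0 μ ξ)
        ≤ |β₁| * 1 * (|ξ|/(2*μ) * phi0 μ ξ) := by
      apply mul_le_mul_of_nonneg_right _ (by positivity)
      exact mul_le_mul_of_nonneg_left hτe1 (abs_nonneg _)
    rw [add_mul]
    have hexp2 : |β₁| * 1 * (|ξ|/(2*μ) * phi0 μ ξ) = |β₁|/(2*μ) * |ξ| * phi0 μ ξ := by ring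
    linarith [hkey, hexp2.symm.le, hexp2.le]
  have hgc : Continuous (fun ξ : ℝ => Ψ ξ τ) := by
    apply hcont.comp_continuous (continuous_id.prodMk continuous_const)
    intro ξ
    exact ⟨mem_univ _, hτ⟩
  have hgi : Integrable (fun ξ : ℝ => Ψ ξ τ) := hint τ hτ
  -- F and G
  set F : ℝ → ℝ := fun x => 1 - 1/(2*μ) * ∫ y in Set.Iio x, (VN μ β₀ β₁ y τ + Ψ y τ) with hFdef
  set G : ℝ → ℝ := fun x => 1 - 1/(2*μ) * ∫ y in Set.Iio x, VN μ β₀ β₁ y τ with hGdef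
  have hFlow : ∀ x, δN ≤ F x := fun x => hlow1 x τ hτ
  have hGlow : ∀ x, δN ≤ G x := fun x => hlow2 x τ hτ
  have hFpos : ∀ x, 0 < F x := fun x => lt_of_lt_of_le hδN (hFlow x)
  have hGpos : ∀ x, 0 < G x := fun x => lt_of_lt_of_le hδN (hGlow x)
  have hDF : ∀ x, HasDerivAt F (-(1/(2*μ)) * (VN μ β₀ β₁ x τ + Ψ x τ)) x := by
    intro x
    have h := hasDerivAt_integral_Iio (fun y => VN μ β₀ β₁ y τ + Ψ y τ)
      (hfc.add hgc) (hfi.add hgi) x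
    have h2 := (h.const_mul (1/(2*μ))).const_sub 1
    exact h2.congr_deriv (by simp only [neg_mul])
  have hDG : ∀ x, HasDerivAt G (-(1/(2*μ)) * VN μ β₀ β₁ x τ) x := by
    intro x
    have h := hasDerivAt_integral_Iio (fun y => VN μ β₀ β₁ y τ) hfc hfi x
    have h2 := (h.const_mul (1/(2*μ))).const_sub 1
    exact h2.congr_deriv (by simp only [neg_mul])
  have hμ2 : (2*μ) ≠ 0 := by positivity
  have key : (fun ξ =>
        (-(2 * μ) * deriv (fun x =>
          Real.log (1 - 1 / (2 * μ) * ∫ y in Set.Iio x, (VN μ β₀ β₁ y τ + Ψ y τ))) ξ)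
        - (-(2 * μ) * deriv (fun x =>
          Real.log (1 - 1 / (2 * μ) * ∫ y in Set.Iio x, VN μ β₀ β₁ y τ)) ξ))
      = fun ξ => (VN μ β₀ β₁ ξ τ + Ψ ξ τ)/F ξ - VN μ β₀ β₁ ξ τ/G ξ := by
    funext ξ
    show -(2 * μ) * deriv (fun x => Real.log (F x)) ξ
        - (-(2 * μ) * deriv (fun x => Real.log (G x)) ξ) = _
    rw [((hDF ξ).log (hFpos ξ).ne').deriv, ((hDG ξ).log (hGpos ξ).ne').deriv]
    field_simp [(hFpos ξ).ne', (hGpos ξ).ne']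
  rw [key]
  have hGF : ∀ ξ, G ξ - F ξ = 1/(2*μ) * ∫ y in Set.Iio ξ, Ψ y τ := by
    intro ξ
    show (1 - 1/(2*μ) * ∫ y in Set.Iio ξ, VN μ β₀ β₁ y τ)
      - (1 - 1/(2*μ) * ∫ y in Set.Iio ξ, (VN μ β₀ β₁ y τ + Ψ y τ)) = _
    rw [integral_add hfi.integrableOn hgi.integrableOn]
    ring
  set ee : ℝ := Real.exp (-τ) with heedef
  have hee : 0 < ee := Real.exp_pos _
  have hee1 : ee ≤ 1 := Real.exp_le_one_iff.2 (by linarith)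
  set bb : ℝ := Cψ * ee / (2*μ*δN^2) with hbbdef
  have hbb : 0 < bb := by positivity
  have hGFb : ∀ ξ, |G ξ - F ξ| ≤ Cψ * ee / (2*μ) := by
    intro ξ
    rw [hGF ξ, abs_mul, abs_of_pos (show (0:ℝ) < 1/(2*μ) by positivity)]
    calc 1/(2*μ) * |∫ y in Set.Iio ξ, Ψ y τ| ≤ 1/(2*μ) * (Cψ * ee) := by
          exact mul_le_mul_of_nonneg_left (hbound2 τ hτ ξ) (by positivity)
      _ = Cψ * ee / (2*μ) := by ring
  have hpt : ∀ ξ, |(VN μ β₀ β₁ ξ τ + Ψ ξ τ)/F ξ - VN μ β₀ β₁ ξ τ/G ξ|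
      ≤ |Ψ ξ τ|/δN + Q ξ * bb := by
    intro ξ
    have hF := hFpos ξ
    have hG := hGpos ξ
    have hsplit : (VN μ β₀ β₁ ξ τ + Ψ ξ τ)/F ξ - VN μ β₀ β₁ ξ τ/G ξ
        = Ψ ξ τ/F ξ + VN μ β₀ β₁ ξ τ * (G ξ - F ξ)/(F ξ * G ξ) := by
      field_simp
      ring
    rw [hsplit]
    refine (abs_add_le _ _).trans (add_le_add ?_ ?_)
    · rw [abs_div, abs_of_pos hF]
      exact div_le_div_of_nonneg_left (abs_nonneg _) hδN (hFlow ξ)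
    · rw [abs_div, abs_mul, abs_of_pos (mul_pos hF hG)]
      have h2 : δN^2 ≤ F ξ * G ξ := by nlinarith [hFlow ξ, hGlow ξ]
      calc |VN μ β₀ β₁ ξ τ| * |G ξ - F ξ| / (F ξ * G ξ)
          ≤ Q ξ * (Cψ * ee / (2*μ)) / δN^2 := by
            apply div_le_div₀ (mul_nonneg (hQnn ξ) (by positivity))
              (mul_le_mul (hfQ ξ) (hGFb ξ) (abs_nonneg _) (hQnn ξ)) (by positivity) h2
        _ = Q ξ * bb := by rw [hbbdef]; ring
  have hptW : ∀ ξ, (1+ξ^2)^m * ((VN μ β₀ β₁ ξ τ + Ψ ξ τ)/F ξ - VN μ β₀ β₁ ξ τ/G ξ)^2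
      ≤ 2/δN^2 * ((1+ξ^2)^m * (Ψ ξ τ)^2) + 2*bb^2 * ((1+ξ^2)^m * (Q ξ)^2) := by
    intro ξ
    have hW : (0:ℝ) ≤ (1+ξ^2)^m := by positivity
    have habs : ((VN μ β₀ β₁ ξ τ + Ψ ξ τ)/F ξ - VN μ β₀ β₁ ξ τ/G ξ)^2
        ≤ (|Ψ ξ τ|/δN + Q ξ * bb)^2 := by
      rw [← sq_abs]
      exact pow_le_pow_left₀ (abs_nonneg _) (hpt ξ) 2
    have hexp : (|Ψ ξ τ|/δN + Q ξ * bb)^2 ≤ 2/δN^2 * (Ψ ξ τ)^2 + 2*bb^2 * (Q ξ)^2 := by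
      refine (sq_add_le_two_sq _ _).trans (le_of_eq ?_)
      rw [div_pow, sq_abs]
      ring
    calc (1+ξ^2)^m * ((VN μ β₀ β₁ ξ τ + Ψ ξ τ)/F ξ - VN μ β₀ β₁ ξ τ/G ξ)^2
        ≤ (1+ξ^2)^m * (2/δN^2 * (Ψ ξ τ)^2 + 2*bb^2 * (Q ξ)^2) :=
          mul_le_mul_of_nonneg_left (habs.trans hexp) hW
      _ = 2/δN^2 * ((1+ξ^2)^m * (Ψ ξ τ)^2) + 2*bb^2 * ((1+ξ^2)^m * (Q ξ)^2) := by ring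
  by_cases hg2 : Integrable (fun ξ : ℝ => (1+ξ^2)^m * (Ψ ξ τ)^2)
  · -- main case
    have hRint : Integrable (fun ξ : ℝ =>
        2/δN^2 * ((1+ξ^2)^m * (Ψ ξ τ)^2) + 2*bb^2 * ((1+ξ^2)^m * (Q ξ)^2)) :=
      (hg2.const_mul _).add (hWQ.const_mul _)
    have hmono := integral_mono_of_nonneg
      (Eventually.of_forall (fun ξ => by positivity)) hRint (Eventually.of_forall hptW)
    have hRval : (∫ ξ : ℝ, (2/δN^2 * ((1+ξ^2)^m * (Ψ ξ τ)^2)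
          + 2*bb^2 * ((1+ξ^2)^m * (Q ξ)^2)))
        = 2/δN^2 * (∫ ξ : ℝ, (1+ξ^2)^m * (Ψ ξ τ)^2) + 2*bb^2 * IQ := by
      rw [integral_add (hg2.const_mul _) (hWQ.const_mul _), integral_const_mul,
        integral_const_mul, hIQdef]
    rw [hRval] at hmono
    set Ig : ℝ := ∫ ξ : ℝ, (1+ξ^2)^m * (Ψ ξ τ)^2 with hIgdef
    have hIgnn : 0 ≤ Ig := integral_nonneg (fun ξ => by positivity)
    have hIgb : Real.sqrt Ig ≤ Cψ * ee := hbound1 τ hτ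
    have hIgb2 : Ig ≤ (Cψ * ee)^2 := by
      have := Real.sq_sqrt hIgnn
      nlinarith [Real.sqrt_nonneg Ig]
    show Real.sqrt (∫ ξ : ℝ, (1+ξ^2)^m
        * ((VN μ β₀ β₁ ξ τ + Ψ ξ τ)/F ξ - VN μ β₀ β₁ ξ τ/G ξ)^2) ≤ _
    have hsq2 : Real.sqrt 2 ^ 2 = 2 := Real.sq_sqrt (by norm_num)
    calc Real.sqrt (∫ ξ : ℝ, (1+ξ^2)^m
          * ((VN μ β₀ β₁ ξ τ + Ψ ξ τ)/F ξ - VN μ β₀ β₁ ξ τ/G ξ)^2)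
        ≤ Real.sqrt (2/δN^2 * Ig + 2*bb^2 * IQ) := Real.sqrt_le_sqrt hmono
      _ ≤ Real.sqrt (2/δN^2 * Ig) + Real.sqrt (2*bb^2 * IQ) :=
          sqrt_add_le_my (by positivity) (by positivity)
      _ ≤ Real.sqrt ((Real.sqrt 2 / δN * (Cψ * ee))^2)
          + Real.sqrt ((Real.sqrt 2 * bb * Kf)^2) := by
          apply add_le_add <;> apply Real.sqrt_le_sqrt
          · have : (Real.sqrt 2 / δN * (Cψ * ee))^2 = 2/δN^2 * (Cψ * ee)^2 := by
              field_simp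
              nlinarith [hsq2]
            rw [this]
            have h2d : (0:ℝ) ≤ 2/δN^2 := by positivity
            nlinarith [hIgb2, h2d]
          · have hIQ : IQ = Kf^2 := (Real.sq_sqrt hIQnn).symm
            rw [hIQ]
            nlinarith [hsq2]
      _ = Real.sqrt 2 / δN * (Cψ * ee) + Real.sqrt 2 * bb * Kf := by
          rw [Real.sqrt_sq (by positivity), Real.sqrt_sq (by positivity)]
      _ ≤ Cφ * Real.exp (-τ) := by
          rw [hCφdef, ← heedef, hbbdef]
          have hexpand : Real.sqrt 2 / δN * (Cψ * ee)
              + Real.sqrt 2 * (Cψ * ee/(2*μ*δN^2)) * Kf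
              = (Real.sqrt 2 * (Cψ/δN) + Real.sqrt 2 * (Cψ/(2*μ*δN^2)) * Kf) * ee := by ring
          rw [hexpand]
          have h1 : (0:ℝ) ≤ Real.sqrt 2 * (Cψ/δN) + Real.sqrt 2 * (Cψ/(2*μ*δN^2)) * Kf := by
            positivity
          nlinarith [hee]
  · -- degenerate case: the integrand cannot be integrable either
    have hWcont : Continuous (fun ξ : ℝ => (1+ξ^2)^m) :=
      (continuous_const.add (continuous_pow 2)).rpow_const (fun x => Or.inr hm0)
    have hnot : ¬ Integrable (fun ξ : ℝ => (1+ξ^2)^m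
        * ((VN μ β₀ β₁ ξ τ + Ψ ξ τ)/F ξ - VN μ β₀ β₁ ξ τ/G ξ)^2) := by
      intro hInt
      apply hg2
      have hgb : ∀ ξ, |Ψ ξ τ| ≤ KF * |(VN μ β₀ β₁ ξ τ + Ψ ξ τ)/F ξ - VN μ β₀ β₁ ξ τ/G ξ|
          + Q ξ * (Cψ/(2*μ*δN)) := by
        intro ξ
        have hF := hFpos ξ
        have hG := hGpos ξ
        have hFupper : F ξ ≤ KF := by
          have h1 : |∫ y in Set.Iio ξ, VN μ β₀ β₁ y τ| ≤ Mf := by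
            calc |∫ y in Set.Iio ξ, VN μ β₀ β₁ y τ|
                ≤ ∫ y in Set.Iio ξ, |VN μ β₀ β₁ y τ| := by
                  simpa [Real.norm_eq_abs] using
                    norm_integral_le_integral_norm (μ := volume.restrict (Set.Iio ξ))
                      (fun y => VN μ β₀ β₁ y τ)
              _ ≤ ∫ y in Set.Iio ξ, Q y := integral_mono_of_nonneg
                  (Eventually.of_forall (fun y => abs_nonneg _)) hQint.integrableOn
                  (Eventually.of_forall (fun y => hfQ y))
              _ ≤ Mf := hQIio ξ
          have h2 : |∫ y in Set.Iio ξ, Ψ y τ| ≤ Cψ := by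
            refine (hbound2 τ hτ ξ).trans ?_
            nlinarith [hee1, hCψ]
          have hFval : F ξ = 1 - 1/(2*μ) * ((∫ y in Set.Iio ξ, VN μ β₀ β₁ y τ)
              + ∫ y in Set.Iio ξ, Ψ y τ) := by
            show (1 - 1/(2*μ) * ∫ y in Set.Iio ξ, (VN μ β₀ β₁ y τ + Ψ y τ)) = _
            rw [integral_add hfi.integrableOn hgi.integrableOn]
          rw [hFval, hKFdef]
          have hA := (abs_le.1 h1).1
          have hB := (abs_le.1 h2).1
          have hμpos : (0:ℝ) < 1/(2*μ) := by positivity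
          have hAB : -(Mf + Cψ) ≤ (∫ y in Set.Iio ξ, VN μ β₀ β₁ y τ)
              + ∫ y in Set.Iio ξ, Ψ y τ := by linarith only [hA, hB]
          have hstep := mul_le_mul_of_nonneg_left hAB hμpos.le
          have hring : (Mf + Cψ)/(2*μ) = 1/(2*μ)*(Mf + Cψ) := by ring
          rw [hring]
          linarith only [hstep]
        have hident : Ψ ξ τ = F ξ * ((VN μ β₀ β₁ ξ τ + Ψ ξ τ)/F ξ - VN μ β₀ β₁ ξ τ/G ξ)
            - VN μ β₀ β₁ ξ τ * (G ξ - F ξ)/G ξ := by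
          field_simp
          ring
        have h3 : |G ξ - F ξ| ≤ Cψ/(2*μ) := by
          refine (hGFb ξ).trans ?_
          have h4 : Cψ * ee ≤ Cψ * 1 := mul_le_mul_of_nonneg_left hee1 hCψ.le
          rw [div_le_div_iff₀ (by positivity) (by positivity)]
          nlinarith [mul_le_mul_of_nonneg_left hee1 hCψ.le, hμ]
        calc |Ψ ξ τ| = |F ξ * ((VN μ β₀ β₁ ξ τ + Ψ ξ τ)/F ξ - VN μ β₀ β₁ ξ τ/G ξ)
              - VN μ β₀ β₁ ξ τ * (G ξ - F ξ)/G ξ| := congrArg abs hident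
          _ ≤ |F ξ * ((VN μ β₀ β₁ ξ τ + Ψ ξ τ)/F ξ - VN μ β₀ β₁ ξ τ/G ξ)|
              + |VN μ β₀ β₁ ξ τ * (G ξ - F ξ)/G ξ| := abs_sub _ _
          _ ≤ KF * |(VN μ β₀ β₁ ξ τ + Ψ ξ τ)/F ξ - VN μ β₀ β₁ ξ τ/G ξ|
              + Q ξ * (Cψ/(2*μ*δN)) := by
            apply add_le_add
            · rw [abs_mul, abs_of_pos hF]
              exact mul_le_mul_of_nonneg_right hFupper (abs_nonneg _)
            · rw [abs_div, abs_mul, abs_of_pos hG]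
              have hnum : |VN μ β₀ β₁ ξ τ| * |G ξ - F ξ| ≤ Q ξ * (Cψ/(2*μ)) :=
                mul_le_mul (hfQ ξ) h3 (abs_nonneg _) (hQnn ξ)
              calc |VN μ β₀ β₁ ξ τ| * |G ξ - F ξ| / G ξ
                  ≤ Q ξ * (Cψ/(2*μ)) / δN :=
                    div_le_div₀ (mul_nonneg (hQnn ξ) (by positivity)) hnum hδN (hGlow ξ)
                _ = Q ξ * (Cψ/(2*μ*δN)) := by ring
      apply Integrable.mono'
        ((hInt.const_mul (2*KF^2)).add (hWQ.const_mul (2*(Cψ/(2*μ*δN))^2)))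
        ((hWcont.mul (hgc.pow 2)).aestronglyMeasurable)
      filter_upwards with ξ
      have hW : (0:ℝ) ≤ (1+ξ^2)^m := by positivity
      show ‖(1+ξ^2)^m * (Ψ ξ τ)^2‖ ≤ 2*KF^2 * ((1+ξ^2)^m * ((VN μ β₀ β₁ ξ τ + Ψ ξ τ)/F ξ - VN μ β₀ β₁ ξ τ/G ξ)^2)
        + 2*(Cψ/(2*μ*δN))^2 * ((1+ξ^2)^m * (Q ξ)^2)
      rw [Real.norm_eq_abs, abs_of_nonneg (mul_nonneg hW (sq_nonneg _))]
      have h := hgb ξ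
      have hsq : (Ψ ξ τ)^2 ≤ 2*KF^2 * ((VN μ β₀ β₁ ξ τ + Ψ ξ τ)/F ξ - VN μ β₀ β₁ ξ τ/G ξ)^2
          + 2*(Cψ/(2*μ*δN))^2 * (Q ξ)^2 := by
        calc (Ψ ξ τ)^2 = |Ψ ξ τ|^2 := (sq_abs _).symm
          _ ≤ (KF * |(VN μ β₀ β₁ ξ τ + Ψ ξ τ)/F ξ - VN μ β₀ β₁ ξ τ/G ξ|
              + Q ξ * (Cψ/(2*μ*δN)))^2 := pow_le_pow_left₀ (abs_nonneg _) h 2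
          _ ≤ 2*(KF * |(VN μ β₀ β₁ ξ τ + Ψ ξ τ)/F ξ - VN μ β₀ β₁ ξ τ/G ξ|)^2
              + 2*(Q ξ * (Cψ/(2*μ*δN)))^2 := sq_add_le_two_sq _ _
          _ = 2*KF^2 * |(VN μ β₀ β₁ ξ τ + Ψ ξ τ)/F ξ - VN μ β₀ β₁ ξ τ/G ξ|^2
              + 2*(Cψ/(2*μ*δN))^2 * (Q ξ)^2 := by ring
          _ = 2*KF^2 * ((VN μ β₀ β₁ ξ τ + Ψ ξ τ)/F ξ - VN μ β₀ β₁ ξ τ/G ξ)^2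
              + 2*(Cψ/(2*μ*δN))^2 * (Q ξ)^2 := by rw [sq_abs]
      calc (1+ξ^2)^m * (Ψ ξ τ)^2
          ≤ (1+ξ^2)^m * (2*KF^2 * ((VN μ β₀ β₁ ξ τ + Ψ ξ τ)/F ξ - VN μ β₀ β₁ ξ τ/G ξ)^2
            + 2*(Cψ/(2*μ*δN))^2 * (Q ξ)^2) := mul_le_mul_of_nonneg_left hsq hW
        _ = 2*KF^2 * ((1+ξ^2)^m * ((VN μ β₀ β₁ ξ τ + Ψ ξ τ)/F ξ - VN μ β₀ β₁ ξ τ/G ξ)^2)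
            + 2*(Cψ/(2*μ*δN))^2 * ((1+ξ^2)^m * (Q ξ)^2) := by ring
    show Real.sqrt (∫ ξ : ℝ, (1+ξ^2)^m
        * ((VN μ β₀ β₁ ξ τ + Ψ ξ τ)/F ξ - VN μ β₀ β₁ ξ τ/G ξ)^2) ≤ _
    rw [integral_undef hnot, Real.sqrt_zero]
    positivity
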